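/- Let m and n be positive integers and p an odd prime. Then \sum_{k=0}^{(p-1)/2} (4k+1) binom((p-1)/2, k)^n H_{2k}^{(2m-1)} \equiv 0 (mod p), in the sense that the numerator of this rational number is divisible by p, provided p does not divide 2^{2m-1} - 1. -/

import Mathlib

open Finset

lemma reflect_inv_pow_sum (p r t : ℕ) [Fact p.Prime] (hr : Odd r) (ht : t ≤ p - 1) :
    ∑ j ∈ Icc (p - t) (p - 1), (((j : ZMod p)) ^ r)⁻¹
      = - ∑ j ∈ Icc 1 t, (((j : ZMod p)) ^ r)⁻¹ := by
  have hp := (Fact.out : p.Prime)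
  have hp1 : 1 < p := hp.one_lt
  rw [← Finset.sum_neg_distrib]
  refine Finset.sum_nbij' (fun j => p - j) (fun j => p - j) ?_ ?_ ?_ ?_ ?_
  · intro a ha; simp only [mem_Icc] at ha ⊢; omega
  · intro a ha; simp only [mem_Icc] at ha ⊢; omega
  · intro a ha; simp only [mem_Icc] at ha; show p - (p - a) = a; omega
  · intro a ha; simp only [mem_Icc] at ha; show p - (p - a) = a; omega
  · intro a ha
    simp only [mem_Icc] at ha
    have hcast : ((p - a : ℕ) : ZMod p) = -(a : ZMod p) := by
      have h1 : (a : ℕ) ≤ p := by omega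
      push_cast [Nat.cast_sub h1]
      simp [ZMod.natCast_self]
    rw [hcast, hr.neg_pow, inv_neg, neg_neg]

lemma two_ne_zero_zmod (p : ℕ) [Fact p.Prime] (hodd : Odd p) : (2 : ZMod p) ≠ 0 := by
  have hp := (Fact.out : p.Prime)
  have : ¬ (p ∣ 2) := by
    intro hd
    have h2 : p = 2 := (Nat.prime_dvd_prime_iff_eq hp Nat.prime_two).mp hd
    rw [h2] at hodd
    exact (by decide : ¬ Odd 2) hodd
  have h2 : ((2 : ℕ) : ZMod p) ≠ 0 := by
    rw [Ne, ZMod.natCast_eq_zero_iff]; exact this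
  simpa using h2

lemma harmonic_reflect (p r t : ℕ) [Fact p.Prime] (hodd : Odd p) (hr : Odd r) (ht : t ≤ p - 1) :
    ∑ j ∈ Icc 1 (p - 1 - t), (((j : ZMod p)) ^ r)⁻¹
      = ∑ j ∈ Icc 1 t, (((j : ZMod p)) ^ r)⁻¹ := by
  have hp := (Fact.out : p.Prime)
  have hp1 : 1 < p := hp.one_lt
  have hfull : ∑ j ∈ Icc 1 (p - 1), (((j : ZMod p)) ^ r)⁻¹ = 0 := by
    have h := reflect_inv_pow_sum p r (p - 1) hr le_rfl
    have he : p - (p - 1) = 1 := by omega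
    rw [he] at h
    have h2 : (2 : ZMod p) * ∑ j ∈ Icc 1 (p - 1), (((j : ZMod p)) ^ r)⁻¹ = 0 := by
      rw [two_mul]; nth_rewrite 1 [h]; ring
    rcases mul_eq_zero.mp h2 with h' | h'
    · exact absurd h' (two_ne_zero_zmod p hodd)
    · exact h'
  have hsplit : ∑ j ∈ Icc 1 (p - 1 - t), (((j : ZMod p)) ^ r)⁻¹
      + ∑ j ∈ Icc (p - t) (p - 1), (((j : ZMod p)) ^ r)⁻¹
      = ∑ j ∈ Icc 1 (p - 1), (((j : ZMod p)) ^ r)⁻¹ := by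
    have h1 : Icc 1 (p - 1 - t) = Ico 1 (p - t) := by
      rw [← Finset.Ico_add_one_right_eq_Icc]; congr 1; omega
    have h2 : Icc (p - t) (p - 1) = Ico (p - t) p := by
      rw [← Finset.Ico_add_one_right_eq_Icc]; congr 1; omega
    have h3 : Icc 1 (p - 1) = Ico 1 p := by
      rw [← Finset.Ico_add_one_right_eq_Icc]; congr 1; omega
    rw [h1, h2, h3]
    exact Finset.sum_Ico_consecutive _ (by omega) (by omega)
  rw [reflect_inv_pow_sum p r t hr ht, hfull] at hsplit
  linear_combination hsplit

lemma main_zmod (p : ℕ) [Fact p.Prime] (hodd : Odd p) (r n : ℕ) (hr : Odd r) :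
    ∑ k ∈ range ((p - 1) / 2 + 1),
        (4 * (k : ZMod p) + 1) * ((((p - 1) / 2).choose k : ℕ) : ZMod p) ^ n *
          ∑ j ∈ Icc 1 (2 * k), (((j : ZMod p)) ^ r)⁻¹ = 0 := by
  have hp := (Fact.out : p.Prime)
  have hp1 : 1 < p := hp.one_lt
  obtain ⟨c, hc⟩ := hodd
  set d := (p - 1) / 2 with hd
  have h2d : 2 * d = p - 1 := by omega
  set g : ℕ → ZMod p := fun k =>
    (4 * (k : ZMod p) + 1) * (((d.choose k : ℕ) : ZMod p)) ^ n *
      ∑ j ∈ Icc 1 (2 * k), (((j : ZMod p)) ^ r)⁻¹ with hg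
  show ∑ k ∈ range (d + 1), g k = 0
  have hc2 : (2 : ZMod p) * (d : ZMod p) = -1 := by
    have : ((2 * d : ℕ) : ZMod p) = ((p - 1 : ℕ) : ZMod p) := by rw [h2d]
    have h1 : ((p - 1 : ℕ) : ZMod p) = (p : ZMod p) - 1 := by
      push_cast [Nat.cast_sub hp1.le]; ring
    rw [h1] at this
    push_cast at this
    rw [this]
    simp [ZMod.natCast_self]
  have key : ∀ k ≤ d, g (d - k) = - g k := by
    intro k hk
    have hcs : d.choose (d - k) = d.choose k := Nat.choose_symm hk
    have hH : 2 * (d - k) = p - 1 - 2 * k := by omega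
    have hHeq : ∑ j ∈ Icc 1 (2 * (d - k)), (((j : ZMod p)) ^ r)⁻¹
        = ∑ j ∈ Icc 1 (2 * k), (((j : ZMod p)) ^ r)⁻¹ := by
      rw [hH]
      exact harmonic_reflect p r (2 * k) ⟨c, hc⟩ hr (by omega)
    have hcoef : (4 * (((d - k : ℕ)) : ZMod p) + 1) = -(4 * (k : ZMod p) + 1) := by
      push_cast [Nat.cast_sub hk]
      linear_combination 2 * hc2
    rw [hg]
    simp only []
    rw [hcs, hHeq, hcoef]
    ring
  have hrefl := Finset.sum_range_reflect g (d + 1)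
  simp only [Nat.add_sub_cancel] at hrefl
  have hneg : ∑ k ∈ range (d + 1), g (d - k) = - ∑ k ∈ range (d + 1), g k := by
    rw [← Finset.sum_neg_distrib]
    apply Finset.sum_congr rfl
    intro k hk
    simp only [mem_range] at hk
    exact key k (by omega)
  rw [hneg] at hrefl
  have h2 : (2 : ZMod p) * ∑ k ∈ range (d + 1), g k = 0 := by
    rw [two_mul]
    nth_rewrite 1 [← hrefl]
    ring
  rcases mul_eq_zero.mp h2 with h' | h'
  · exact absurd h' (two_ne_zero_zmod p ⟨c, hc⟩)
  · exact h'

theorem sum_4k1_choose_harmonic_odd_order (m n : ℕ) (hm : 0 < m) (hn : 0 < n)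
    (p : ℕ) (hp : p.Prime) (hodd : Odd p) (hdvd : ¬ (p : ℤ) ∣ 2 ^ (2 * m - 1) - 1) :
    (p : ℤ) ∣
      (∑ k ∈ Finset.range ((p - 1) / 2 + 1),
          (4 * (k : ℚ) + 1) * (Nat.choose ((p - 1) / 2) k : ℚ) ^ n *
            ∑ j ∈ Finset.Icc 1 (2 * k), (1 : ℚ) / (j : ℚ) ^ (2 * m - 1)).num := by
  haveI : Fact p.Prime := ⟨hp⟩
  have hp1 : 1 < p := hp.one_lt
  set r := 2 * m - 1 with hr_def
  have hr : Odd r := ⟨m - 1, by omega⟩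
  set d := (p - 1) / 2 with hd_def
  have h2d : 2 * d = p - 1 := by obtain ⟨c, hc⟩ := hodd; omega
  set q : ℚ := ∑ k ∈ Finset.range (d + 1),
      (4 * (k : ℚ) + 1) * (Nat.choose d k : ℚ) ^ n *
        ∑ j ∈ Finset.Icc 1 (2 * k), (1 : ℚ) / (j : ℚ) ^ r with hq_def
  set fact := (p - 1).factorial with hfact_def
  set w : ℕ → ℕ := fun j => fact / j with hw_def
  have hwj : ∀ k ∈ range (d + 1), ∀ j ∈ Icc 1 (2 * k), w j * j = fact := by
    intro k hk j hj
    simp only [mem_range] at hk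
    simp only [mem_Icc] at hj
    exact Nat.div_mul_cancel (Nat.dvd_factorial (by omega) (by omega))
  set T : ℤ := ∑ k ∈ Finset.range (d + 1),
      (4 * (k : ℤ) + 1) * (Nat.choose d k : ℤ) ^ n *
        ∑ j ∈ Finset.Icc 1 (2 * k), (w j : ℤ) ^ r with hT_def
  -- Claim 1 : q * fact ^ r = T in ℚ
  have claim1 : q * (fact : ℚ) ^ r = (T : ℚ) := by
    rw [hq_def, hT_def, Finset.sum_mul]
    push_cast
    apply Finset.sum_congr rfl
    intro k hk
    have hinner : (∑ j ∈ Icc 1 (2 * k), (1 : ℚ) / (j : ℚ) ^ r) * (fact : ℚ) ^ r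
        = ∑ j ∈ Icc 1 (2 * k), ((w j : ℕ) : ℚ) ^ r := by
      rw [Finset.sum_mul]
      apply Finset.sum_congr rfl
      intro j hj
      have hj' := hj
      simp only [mem_Icc] at hj'
      have h1 : w j * j = fact := hwj k hk j hj
      have hjne : (j : ℚ) ≠ 0 := by
        exact_mod_cast (by omega : (j : ℕ) ≠ 0)
      have h2 : (w j : ℚ) = (fact : ℚ) / (j : ℚ) := by
        field_simp
        exact_mod_cast h1
      rw [h2, div_pow]
      field_simp
    calc (4 * (k:ℚ) + 1) * ((d.choose k : ℕ) : ℚ) ^ n * (∑ j ∈ Icc 1 (2 * k), (1 : ℚ) / (j : ℚ) ^ r) * (fact : ℚ) ^ r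
        = (4 * (k:ℚ) + 1) * ((d.choose k : ℕ) : ℚ) ^ n * ((∑ j ∈ Icc 1 (2 * k), (1 : ℚ) / (j : ℚ) ^ r) * (fact : ℚ) ^ r) := by ring
      _ = (4 * (k:ℚ) + 1) * ((d.choose k : ℕ) : ℚ) ^ n * ∑ j ∈ Icc 1 (2 * k), ((w j : ℕ) : ℚ) ^ r := by rw [hinner]
  -- Claim 2 : p ∣ T
  have claim2 : (p : ℤ) ∣ T := by
    rw [← ZMod.intCast_zmod_eq_zero_iff_dvd]
    rw [hT_def]
    push_cast
    have hinner : ∀ k ∈ range (d + 1),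
        (∑ j ∈ Icc 1 (2 * k), ((w j : ℕ) : ZMod p) ^ r)
          = (fact : ZMod p) ^ r * ∑ j ∈ Icc 1 (2 * k), (((j : ZMod p)) ^ r)⁻¹ := by
      intro k hk
      rw [Finset.mul_sum]
      apply Finset.sum_congr rfl
      intro j hj
      have hj' := hj
      simp only [mem_Icc] at hj'
      simp only [mem_range] at hk
      have h1 : w j * j = fact := hwj k (by simp [mem_range]; omega) j hj
      have hjne : (j : ZMod p) ≠ 0 := by
        rw [Ne, ZMod.natCast_eq_zero_iff]
        intro hdd
        have := Nat.le_of_dvd (by omega) hdd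
        omega
      have h2 : ((w j : ℕ) : ZMod p) = (fact : ZMod p) * ((j : ZMod p))⁻¹ := by
        field_simp
        exact_mod_cast congrArg (Nat.cast : ℕ → ZMod p) h1
      rw [h2, mul_pow, inv_pow]
    calc (∑ k ∈ Finset.range (d + 1),
        (4 * (k : ZMod p) + 1) * ((Nat.choose d k : ℕ) : ZMod p) ^ n *
          ∑ j ∈ Finset.Icc 1 (2 * k), ((w j : ℕ) : ZMod p) ^ r)
        = ∑ k ∈ Finset.range (d + 1),
        (4 * (k : ZMod p) + 1) * ((Nat.choose d k : ℕ) : ZMod p) ^ n *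
          ((fact : ZMod p) ^ r * ∑ j ∈ Finset.Icc 1 (2 * k), (((j : ZMod p)) ^ r)⁻¹) := by
          apply Finset.sum_congr rfl
          intro k hk
          rw [hinner k hk]
      _ = (fact : ZMod p) ^ r * ∑ k ∈ Finset.range (d + 1),
        (4 * (k : ZMod p) + 1) * ((Nat.choose d k : ℕ) : ZMod p) ^ n *
          ∑ j ∈ Finset.Icc 1 (2 * k), (((j : ZMod p)) ^ r)⁻¹ := by
          rw [Finset.mul_sum]
          apply Finset.sum_congr rfl
          intro k hk
          ring
      _ = 0 := by
          rw [main_zmod p hodd r n hr, mul_zero]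
  -- Claim 3 : conclude
  have hden : ((q.den : ℚ)) ≠ 0 := Nat.cast_ne_zero.mpr q.den_nz
  have hqnum : (q.num : ℚ) = q * (q.den : ℚ) := by
    calc (q.num : ℚ) = (q.num : ℚ) / (q.den : ℚ) * (q.den : ℚ) := by field_simp
      _ = q * (q.den : ℚ) := by rw [Rat.num_div_den q]
  have hnum : q.num * (fact : ℤ) ^ r = T * (q.den : ℤ) := by
    have h : ((q.num : ℚ)) * (fact : ℚ) ^ r = (T : ℚ) * ((q.den : ℚ)) := by
      rw [hqnum]
      calc q * (q.den : ℚ) * (fact : ℚ) ^ r = q * (fact : ℚ) ^ r * (q.den : ℚ) := by ring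
        _ = (T : ℚ) * ((q.den : ℚ)) := by rw [claim1]
    exact_mod_cast h
  have hdvd2 : (p : ℤ) ∣ q.num * (fact : ℤ) ^ r := by
    rw [hnum]
    exact claim2.mul_right _
  have hpZ : Prime (p : ℤ) := Nat.prime_iff_prime_int.mp hp
  rcases hpZ.dvd_mul.mp hdvd2 with h | h
  · exact h
  · exfalso
    have h2 : (p : ℤ) ∣ (fact : ℤ) := hpZ.dvd_of_dvd_pow h
    have h3 : p ∣ fact := Int.natCast_dvd_natCast.mp h2
    have := (hp.dvd_factorial).mp h3
    omega
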